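/- In the abstract Pestov setup (X* = -X, [X,V] = -H, [X,H] = RV, H*V - V*H = -(n-1)X on a common domain), suppose moreover that ⟨Ru, u⟩ ≤ -‖Pu‖² for all u, where P is some operator (a 'negative curvature' assumption). Then any u in the domain with Xu = 0 satisfies XVu = 0 and PVu = 0. -/
import Mathlib


open scoped InnerProductSpace

/-- Under a negative-curvature assumption `⟨Ru,u⟩ ≤ -‖Pu‖²`,
any `u` with `Xu = 0` satisfies `XVu = 0` and `PVu = 0`. -/
theorem stmt5 {E : Type*} [NormedAddCommGroup E] [InnerProductSpace ℂ E]
    (n : ℕ) (X V H R Xs Vs Hs : E →ₗ[ℂ] E)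
    (hXadj : ∀ u v : E, ⟪X u, v⟫_ℂ = ⟪u, Xs v⟫_ℂ)
    (hXs : Xs = -X)
    (hVadj : ∀ u v : E, ⟪V u, v⟫_ℂ = ⟪u, Vs v⟫_ℂ)
    (hHadj : ∀ u v : E, ⟪H u, v⟫_ℂ = ⟪u, Hs v⟫_ℂ)
    (hH : H = -(X ∘ₗ V - V ∘ₗ X))
    (hXH : X ∘ₗ H - H ∘ₗ X = R ∘ₗ V)
    (hHV : Hs ∘ₗ V - Vs ∘ₗ H = (-((n : ℂ) - 1)) • X) :
    ∀ (P : E →ₗ[ℂ] E), (∀ u : E, (⟪R u, u⟫_ℂ).re ≤ -‖P u‖ ^ 2) →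
      ∀ u : E, X u = 0 → X (V u) = 0 ∧ P (V u) = 0 := by
  intro P hP u hXu
  have hHu : H u = - X (V u) := by
    have := congrArg (fun f : E →ₗ[ℂ] E => f u) hH
    simp [hXu] at this
    simpa using this
  have hRVu : R (V u) = X (H u) := by
    have := congrArg (fun f : E →ₗ[ℂ] E => f u) hXH
    simp [hXu] at this
    simpa using this.symm
  have hinner : (⟪R (V u), V u⟫_ℂ).re = ‖X (V u)‖ ^ 2 := by
    rw [hRVu, hXadj, hXs, hHu]
    simpa using inner_self_eq_norm_sq (𝕜 := ℂ) (X (V u))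
  have hle := hP (V u)
  rw [hinner] at hle
  have hX0 : ‖X (V u)‖ ^ 2 = 0 ∧ ‖P (V u)‖ ^ 2 = 0 := by
    constructor <;> nlinarith [sq_nonneg ‖X (V u)‖, sq_nonneg ‖P (V u)‖]
  constructor
  · have := hX0.1
    rwa [pow_eq_zero_iff (by norm_num), norm_eq_zero] at this
  · have := hX0.2
    rwa [pow_eq_zero_iff (by norm_num), norm_eq_zero] at this
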